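/- arXiv:0805.0585 — 2 statements merged into one kernel-verified Lean document; each statement's English description precedes it below -/
import Mathlib

section
/- Let T be a spanning tree of a connected weighted graph (G, c). T has maximal weight among all spanning trees if and only if for every edge e ∈ E − T, the weight c(e) is at most the minimum weight of the edges on the unique path in T joining the endpoints of e. -/
open SimpleGraph

variable {V : Type}

/-- Transfer reachability from `S` to `K` when all edges of `S` except possibly `e`
are edges of `K`, and the endpoints of `e` are reachable in `K`. -/
lemma aux_reach_transfer {S K : SimpleGraph V} {x y : V}
    (hK : ∀ d ∈ S.edgeSet, d ≠ s(x, y) → d ∈ K.edgeSet)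
    (hr : K.Reachable x y) :
    ∀ {a b : V}, S.Reachable a b → K.Reachable a b := by
  intro a b ⟨p⟩
  induction p with
  | nil => exact Reachable.refl _
  | cons h q ih =>
    rename_i a w b
    by_cases he : s(a, w) = s(x, y)
    · rcases Sym2.eq_iff.mp he with ⟨rfl, rfl⟩ | ⟨rfl, rfl⟩
      · exact hr.trans ih
      · exact hr.symm.trans ih
    · exact (Adj.reachable ((SimpleGraph.mem_edgeSet (G := K)).mp (hK _ ((SimpleGraph.mem_edgeSet (G := S)).mpr h) he))).trans ih

/-- Two-sided transfer: every `S`-reachability is witnessed in `K` possibly broken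
at the edge `s(u,v)`. -/
lemma aux_reach_two {S K : SimpleGraph V} {u v : V}
    (hK : ∀ d ∈ S.edgeSet, d ≠ s(u, v) → d ∈ K.edgeSet) :
    ∀ {a b : V}, S.Reachable a b → K.Reachable a b ∨
      (K.Reachable a u ∧ K.Reachable v b) ∨ (K.Reachable a v ∧ K.Reachable u b) := by
  intro a b ⟨p⟩
  induction p with
  | nil => exact Or.inl (Reachable.refl _)
  | cons h q ih =>
    rename_i a w b
    by_cases he : s(a, w) = s(u, v)
    · rcases Sym2.eq_iff.mp he with ⟨ha, hw⟩ | ⟨ha, hw⟩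
      · subst ha; subst hw
        rcases ih with h1 | ⟨h2, h3⟩ | ⟨h2, h3⟩
        · exact Or.inr (Or.inl ⟨Reachable.refl _, h1⟩)
        · exact Or.inl (h2.symm.trans h3)
        · exact Or.inl h3
      · subst ha; subst hw
        rcases ih with h1 | ⟨h2, h3⟩ | ⟨h2, h3⟩
        · exact Or.inr (Or.inr ⟨Reachable.refl _, h1⟩)
        · exact Or.inl h3
        · exact Or.inr (Or.inr ⟨Reachable.refl _, h3⟩)
    · have hadj : K.Adj a w :=
        (SimpleGraph.mem_edgeSet (G := K)).mp (hK _ ((SimpleGraph.mem_edgeSet (G := S)).mpr h) he)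
      rcases ih with h1 | ⟨h2, h3⟩ | ⟨h2, h3⟩
      · exact Or.inl (hadj.reachable.trans h1)
      · exact Or.inr (Or.inl ⟨hadj.reachable.trans h2, h3⟩)
      · exact Or.inr (Or.inr ⟨hadj.reachable.trans h2, h3⟩)

/-- Along a walk from a vertex satisfying `P` to one not satisfying it, some edge crosses. -/
lemma aux_exists_cross {S : SimpleGraph V} (P : V → Prop) :
    ∀ {u v : V} (p : S.Walk u v), P u → ¬ P v →
      ∃ x y, s(x, y) ∈ p.edges ∧ S.Adj x y ∧ P x ∧ ¬ P y := by
  intro u v p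
  induction p with
  | nil => intro h1 h2; exact absurd h1 h2
  | cons h q ih =>
    rename_i a w b
    intro h1 h2
    by_cases hw : P w
    · obtain ⟨x, y, hm, hadj, hx, hy⟩ := ih hw h2
      exact ⟨x, y, by simp [Walk.edges_cons, hm], hadj, hx, hy⟩
    · exact ⟨a, w, by simp [Walk.edges_cons], h, h1, hw⟩

/-- If a trail from `u` to `v` contains the edge `s(x,y)`, all its other edges lie
in `K`, and `u, v` are reachable in `K`, then `x, y` are reachable in `K`. -/
lemma aux_endpoints_reach {S K : SimpleGraph V} {x y : V} :
    ∀ {u v : V} (p : S.Walk u v), p.IsTrail → s(x, y) ∈ p.edges →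
      (∀ d ∈ p.edges, d ≠ s(x, y) → d ∈ K.edgeSet) → K.Reachable u v →
      K.Reachable x y := by
  intro u v p
  induction p with
  | nil => intro _ hm; simp at hm
  | cons h q ih =>
    rename_i a w b
    intro htrail hm hedges hr
    by_cases he : s(a, w) = s(x, y)
    · have hq : ∀ d ∈ q.edges, d ∈ K.edgeSet := by
        intro d hd
        refine hedges d (by simp [hd]) ?_
        rintro rfl
        exact (((Walk.isTrail_cons h q).mp htrail)).2 (he ▸ hd)
      have hwb : K.Reachable w b := (q.transfer K hq).reachable
      have haw : K.Reachable a w := hr.trans hwb.symm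
      rcases Sym2.eq_iff.mp he with ⟨rfl, rfl⟩ | ⟨rfl, rfl⟩
      · exact haw
      · exact haw.symm
    · have hm' : s(x, y) ∈ q.edges := by
        rw [Walk.edges_cons] at hm
        rcases List.mem_cons.mp hm with h' | h'
        · exact absurd h'.symm he
        · exact h'
      have hadj : K.Adj a w := (SimpleGraph.mem_edgeSet (G := K)).mp
        (hedges _ (by simp) he)
      exact ih (((Walk.isTrail_cons h q).mp htrail)).1 hm' (fun d hd => hedges d (by simp [hd])) (hadj.reachable.symm.trans hr)

lemma aux_edgeSet_del (H : SimpleGraph V) (e : Sym2 V) :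
    (H \ fromEdgeSet {e}).edgeSet = H.edgeSet \ {e} := by
  rw [edgeSet_sdiff, edgeSet_fromEdgeSet, edgeSet_sdiff_sdiff_isDiag]

lemma aux_del_connected {H : SimpleGraph V} {v w : V} (hH : H.Connected)
    (hadj : H.Adj v w) (hnb : ¬ H.IsBridge s(v, w)) :
    (H \ fromEdgeSet {s(v, w)}).Connected := by
  have hreach : (H \ fromEdgeSet {s(v, w)}).Reachable v w := by
    by_contra hcon
    exact hnb (SimpleGraph.isBridge_iff.mpr hcon)
  have hK : ∀ d ∈ H.edgeSet, d ≠ s(v, w) → d ∈ (H \ fromEdgeSet {s(v, w)}).edgeSet := by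
    intro d hd hne
    rw [aux_edgeSet_del]
    exact ⟨hd, hne⟩
  rw [connected_iff]
  exact ⟨fun a b => aux_reach_transfer hK hreach (hH.preconnected a b), hH.nonempty⟩

lemma aux_exists_tree_le [Fintype V] :
    ∀ (n : ℕ) (H : SimpleGraph V), H.edgeSet.ncard = n → H.Connected →
      ∃ S, S ≤ H ∧ S.IsTree := by
  intro n
  induction n using Nat.strong_induction_on with
  | _ n ih =>
    intro H hn hH
    by_cases hac : H.IsAcyclic
    · exact ⟨H, le_refl H, ⟨hH, hac⟩⟩
    · rw [isAcyclic_iff_forall_adj_isBridge] at hac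
      push_neg at hac
      obtain ⟨v, w, hadj, hnb⟩ := hac
      have hKconn := aux_del_connected hH hadj hnb
      have hcard : (H \ fromEdgeSet {s(v, w)}).edgeSet.ncard < n := by
        rw [aux_edgeSet_del, ← hn]
        have := Set.ncard_diff_singleton_add_one (H.mem_edgeSet.mpr hadj)
          (Set.toFinite H.edgeSet)
        omega
      obtain ⟨S, hle, hS⟩ := ih _ hcard _ rfl hKconn
      exact ⟨S, hle.trans sdiff_le, hS⟩

lemma aux_tree_card [Fintype V] {S : SimpleGraph V} (hS : S.IsTree) :
    S.edgeSet.ncard + 1 = Fintype.card V := by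
  classical
  rw [Set.ncard_eq_toFinset_card' S.edgeSet]
  exact hS.card_edgeFinset

lemma aux_conn_card_le [Fintype V] {H : SimpleGraph V} (hH : H.Connected) :
    Fintype.card V ≤ H.edgeSet.ncard + 1 := by
  obtain ⟨S, hle, hS⟩ := aux_exists_tree_le H.edgeSet.ncard H rfl hH
  rw [← aux_tree_card hS]
  have := Set.ncard_le_ncard (edgeSet_subset_edgeSet.mpr hle) (Set.toFinite H.edgeSet)
  omega

lemma aux_isTree_of_card [Fintype V] {H : SimpleGraph V} (hH : H.Connected)
    (hc : H.edgeSet.ncard + 1 = Fintype.card V) : H.IsTree := by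
  refine ⟨hH, ?_⟩
  by_contra hac
  rw [isAcyclic_iff_forall_adj_isBridge] at hac
  push_neg at hac
  obtain ⟨v, w, hadj, hnb⟩ := hac
  have hKconn := aux_del_connected hH hadj hnb
  have h1 := aux_conn_card_le hKconn
  rw [aux_edgeSet_del] at h1
  have h2 := Set.ncard_diff_singleton_add_one (H.mem_edgeSet.mpr hadj)
    (Set.toFinite H.edgeSet)
  omega

lemma aux_swap_edgeSet (S : SimpleGraph V) (e f : Sym2 V) (hfd : ¬ f.IsDiag) :
    (S \ fromEdgeSet {e} ⊔ fromEdgeSet {f}).edgeSet = (S.edgeSet \ {e}) ∪ {f} := by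
  rw [edgeSet_sup, aux_edgeSet_del, edgeSet_fromEdgeSet]
  congr 1
  ext d
  simp only [Set.mem_diff, Set.mem_singleton_iff, Set.mem_setOf_eq, and_iff_left_iff_imp]
  rintro rfl
  exact hfd

lemma aux_swap_isTree [Fintype V] {S : SimpleGraph V} (hS : S.IsTree) {e f : Sym2 V}
    (he : e ∈ S.edgeSet) (hf : f ∉ S.edgeSet) (hfd : ¬ f.IsDiag)
    (hconn : (S \ fromEdgeSet {e} ⊔ fromEdgeSet {f}).Connected) :
    (S \ fromEdgeSet {e} ⊔ fromEdgeSet {f}).IsTree := by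
  refine aux_isTree_of_card hconn ?_
  rw [aux_swap_edgeSet S e f hfd, Set.union_singleton,
    Set.ncard_insert_of_notMem (fun h => hf h.1) (Set.toFinite _)]
  have h1 := Set.ncard_diff_singleton_add_one he (Set.toFinite S.edgeSet)
  have h2 := aux_tree_card hS
  omega

lemma aux_weight_swap (c : Sym2 V → ℝ) {A : Set (Sym2 V)} (hA : A.Finite) {e f : Sym2 V}
    (he : e ∈ A) (hf : f ∉ A) :
    ∑ᶠ x ∈ (A \ {e}) ∪ {f}, c x = (∑ᶠ x ∈ A, c x) - c e + c f := by
  have hd1 : Disjoint (A \ {e}) {f} := by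
    rw [Set.disjoint_singleton_right]
    exact fun h => hf h.1
  have hd2 : Disjoint (A \ {e}) {e} := Set.disjoint_sdiff_left
  have h1 : ∑ᶠ x ∈ (A \ {e}) ∪ {f}, c x = (∑ᶠ x ∈ A \ {e}, c x) + c f := by
    rw [finsum_mem_union hd1 hA.diff (Set.finite_singleton f), finsum_mem_singleton]
  have h2 : ∑ᶠ x ∈ A, c x = (∑ᶠ x ∈ A \ {e}, c x) + c e := by
    conv_lhs => rw [← Set.diff_union_of_subset (Set.singleton_subset_iff.mpr he)]
    rw [finsum_mem_union hd2 hA.diff (Set.finite_singleton e), finsum_mem_singleton]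
  rw [h1, h2]
  ring

lemma aux_fromEdgeSet_le {G : SimpleGraph V} {x y : V} (h : G.Adj x y) :
    fromEdgeSet {s(x, y)} ≤ G := by
  intro a b hab
  rw [fromEdgeSet_adj, Set.mem_singleton_iff] at hab
  rcases Sym2.eq_iff.mp hab.1 with ⟨rfl, rfl⟩ | ⟨rfl, rfl⟩
  · exact h
  · exact h.symm

/-- a spanning tree `T` of a finite connected weighted graph
`(G, c)` has maximal weight among all spanning trees if and only if, for every
edge `e` of `G` not in `T` with endpoints `u`, `v`, the weight `c e` is at
most the weight of every edge on the (unique) path in `T` joining `u` and `v`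
(i.e. at most their minimum). -/
theorem maximal_spanning_tree_iff {V : Type} [Fintype V] (G : SimpleGraph V)
    (c : Sym2 V → ℝ) (hG : G.Connected) (T : SimpleGraph V) (hTG : T ≤ G)
    (hT : T.IsTree) :
    (∀ T' : SimpleGraph V, T' ≤ G → T'.IsTree →
        ∑ᶠ e ∈ T'.edgeSet, c e ≤ ∑ᶠ e ∈ T.edgeSet, c e) ↔
      (∀ u v : V, G.Adj u v → ¬ T.Adj u v →
        ∀ p : T.Walk u v, p.IsPath → ∀ e' ∈ p.edges, c s(u, v) ≤ c e') := by
  constructor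
  · intro hmax u v hGuv hTuv p hp e' he'
    revert he'
    induction e' using Sym2.ind with
    | _ x y =>
      intro he'
      have hxyT : s(x, y) ∈ T.edgeSet := p.edges_subset_edgeSet he'
      have hfT : s(u, v) ∉ T.edgeSet := fun h => hTuv (T.mem_edgeSet.mp h)
      have hfd : ¬ (s(u, v) : Sym2 V).IsDiag := by
        simp [Sym2.mk_isDiag_iff, hGuv.ne]
      set T'' := T \ fromEdgeSet {s(x, y)} ⊔ fromEdgeSet {s(u, v)} with hT''
      have hTe : T''.edgeSet = (T.edgeSet \ {s(x, y)}) ∪ {s(u, v)} :=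
        aux_swap_edgeSet T _ _ hfd
      have hK : ∀ d ∈ T.edgeSet, d ≠ s(x, y) → d ∈ T''.edgeSet := by
        intro d hd hne
        rw [hTe]; exact Or.inl ⟨hd, hne⟩
      have huv : T''.Adj u v := by
        exact (SimpleGraph.sup_adj _ _ _ _).mpr (Or.inr ((fromEdgeSet_adj _).mpr ⟨rfl, hGuv.ne⟩))
      have hxy : T''.Reachable x y :=
        aux_endpoints_reach p hp.isTrail he'
          (fun d hd hne => hK d (p.edges_subset_edgeSet hd) hne) huv.reachable
      have hconn : T''.Connected := by
        rw [connected_iff]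
        exact ⟨fun a b => aux_reach_transfer hK hxy
          (hT.isConnected.preconnected a b), hT.isConnected.nonempty⟩
      have htree : T''.IsTree := aux_swap_isTree hT hxyT hfT hfd hconn
      have hle : T'' ≤ G := by
        apply sup_le (le_trans sdiff_le hTG)
        exact aux_fromEdgeSet_le hGuv
      have := hmax T'' hle htree
      rw [hTe, aux_weight_swap c (Set.toFinite _) hxyT hfT] at this
      linarith
  · intro hcond
    suffices h : ∀ (n : ℕ) (T' : SimpleGraph V), T' ≤ G → T'.IsTree →
        (T'.edgeSet \ T.edgeSet).ncard = n →
        ∑ᶠ e ∈ T'.edgeSet, c e ≤ ∑ᶠ e ∈ T.edgeSet, c e by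
      intro T' hle htree
      exact h _ T' hle htree rfl
    intro n
    induction n using Nat.strong_induction_on with
    | _ n ih =>
      intro T' hle htree hn
      by_cases hsub : T'.edgeSet ⊆ T.edgeSet
      · have hcards : T.edgeSet.ncard ≤ T'.edgeSet.ncard := by
          have := aux_tree_card htree
          have := aux_tree_card hT
          omega
        rw [Set.eq_of_subset_of_ncard_le hsub hcards (Set.toFinite _)]
      · obtain ⟨e, heT', heT⟩ := Set.not_subset.mp hsub
        revert heT' heT
        induction e using Sym2.ind with
        | _ a b =>
          intro heT' heT
          have hT'ab : T'.Adj a b := T'.mem_edgeSet.mp heT'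
          have hGab : G.Adj a b := hle hT'ab
          have hTab : ¬ T.Adj a b := fun h => heT (T.mem_edgeSet.mpr h)
          have hbridge : ¬ (T' \ fromEdgeSet {s(a, b)}).Reachable a b := by
            have := isAcyclic_iff_forall_adj_isBridge.mp htree.IsAcyclic hT'ab
            exact SimpleGraph.isBridge_iff.mp this
          obtain ⟨p, hp, -⟩ := hT.existsUnique_path a b
          obtain ⟨x, y, hxyp, hxyT, hPx, hPy⟩ :=
            aux_exists_cross (fun z => (T' \ fromEdgeSet {s(a, b)}).Reachable a z) p
              (Reachable.refl _) hbridge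
          have hxyTe : s(x, y) ∈ T.edgeSet := T.mem_edgeSet.mpr hxyT
          have hxyT' : s(x, y) ∉ T'.edgeSet := by
            intro hmem
            by_cases hcase : s(x, y) = s(a, b)
            · exact heT (hcase ▸ hxyTe)
            · have : (T' \ fromEdgeSet {s(a, b)}).Adj x y := by
                rw [← SimpleGraph.mem_edgeSet, aux_edgeSet_del]
                exact ⟨hmem, hcase⟩
              exact hPy (hPx.trans this.reachable)
          have hfd : ¬ (s(a, b) : Sym2 V).IsDiag := by
            simp [Sym2.mk_isDiag_iff, hGab.ne]
          set T'' := T' \ fromEdgeSet {s(a, b)} ⊔ fromEdgeSet {s(x, y)} with hT''def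
          have hTe : T''.edgeSet = (T'.edgeSet \ {s(a, b)}) ∪ {s(x, y)} := by
            apply aux_swap_edgeSet
            simp [Sym2.mk_isDiag_iff, hxyT.ne]
          have hK : ∀ d ∈ T'.edgeSet, d ≠ s(a, b) → d ∈ T''.edgeSet := by
            intro d hd hne
            rw [hTe]; exact Or.inl ⟨hd, hne⟩
          have hxyAdj : T''.Adj x y := by
            exact (SimpleGraph.sup_adj _ _ _ _).mpr (Or.inr ((fromEdgeSet_adj _).mpr ⟨rfl, hxyT.ne⟩))
          have hyb : (T' \ fromEdgeSet {s(a, b)}).Reachable b y := by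
            have hKdel : ∀ d ∈ T'.edgeSet, d ≠ s(a, b) →
                d ∈ (T' \ fromEdgeSet {s(a, b)}).edgeSet := by
              intro d hd hne
              rw [aux_edgeSet_del]; exact ⟨hd, hne⟩
            rcases aux_reach_two hKdel (htree.isConnected.preconnected b y) with
              h1 | ⟨h2, h3⟩ | ⟨h2, h3⟩
            · exact h1
            · exact h3
            · exact absurd (hPy) (not_not.mpr h3)
          have hab : T''.Reachable a b :=
            ((hPx.mono le_sup_left).trans hxyAdj.reachable).trans
              ((hyb.mono le_sup_left).symm)
          have hconn : T''.Connected := by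
            rw [connected_iff]
            exact ⟨fun u' v' => aux_reach_transfer hK hab
              (htree.isConnected.preconnected u' v'), htree.isConnected.nonempty⟩
          have htree'' : T''.IsTree := by
            apply aux_swap_isTree htree heT' hxyT' _ hconn
            simp [Sym2.mk_isDiag_iff, hxyT.ne]
          have hle'' : T'' ≤ G := by
            apply sup_le (le_trans sdiff_le hle)
            exact aux_fromEdgeSet_le (hTG hxyT)
          have hmeas : (T''.edgeSet \ T.edgeSet).ncard < n := by
            have hset : T''.edgeSet \ T.edgeSet =
                (T'.edgeSet \ T.edgeSet) \ {s(a, b)} := by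
              rw [hTe]
              ext d
              simp only [Set.mem_diff, Set.mem_union, Set.mem_singleton_iff]
              constructor
              · rintro ⟨(⟨hd1, hd2⟩ | rfl), hd3⟩
                · exact ⟨⟨hd1, hd3⟩, hd2⟩
                · exact absurd hxyTe hd3
              · rintro ⟨⟨hd1, hd2⟩, hd3⟩
                exact ⟨Or.inl ⟨hd1, hd3⟩, hd2⟩
            rw [hset, ← hn]
            have := Set.ncard_diff_singleton_add_one (show s(a,b) ∈ T'.edgeSet \ T.edgeSet
              from ⟨heT', heT⟩) (Set.toFinite _)
            omega
          have hIH := ih _ hmeas T'' hle'' htree'' rfl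
          have hcineq : c s(a, b) ≤ c s(x, y) :=
            hcond a b hGab hTab p hp _ hxyp
          rw [hTe, aux_weight_swap c (Set.toFinite _) heT' hxyT'] at hIH
          linarith
end

section
/- If D is the m × n incidence matrix of a finite directed graph without loops, with m vertices, n edges, and p connected components, then the rank of D is m − p; moreover the kernel of D equals the cycle (flow) space and the row space of D equals the cocycle (tension) space. -/
/-- A chain (walk in the underlying undirected graph) from `u` to `v` in the
digraph `(V, E, s, t)`: each step traverses an edge either forwards (`true`)
or backwards (`false`). -/
def IsChainL {V E : Type} (s t : E → V) : V → List (E × Bool) → V → Prop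
  | u, [], v => u = v
  | u, (e, true) :: l, v => s e = u ∧ IsChainL s t (t e) l v
  | u, (e, false) :: l, v => t e = u ∧ IsChainL s t (s e) l v

/-- The representative vectors of cycles (closed walks in the underlying
undirected graph with no repeated edge). -/
def cycleVecs {V E : Type} (s t : E → V) : Set (E → ℝ) :=
  {γ | ∃ (a : V) (l : List (E × Bool)), IsChainL s t a l a ∧
    (l.map Prod.fst).Nodup ∧
    ∀ e : E, ((e, true) ∈ l → γ e = 1) ∧ ((e, false) ∈ l → γ e = -1) ∧
      ((e, true) ∉ l ∧ (e, false) ∉ l → γ e = 0)}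

/-- The representative vectors of cocycles `Ω(Y)`, `Y ⊆ V`. -/
def cocycleVecs {V E : Type} (s t : E → V) : Set (E → ℝ) :=
  {ω | ∃ Y : Set V,
    ∀ e : E, (s e ∈ Y ∧ t e ∉ Y → ω e = 1) ∧ (s e ∉ Y ∧ t e ∈ Y → ω e = -1) ∧
      (¬(s e ∈ Y ∧ t e ∉ Y) ∧ ¬(s e ∉ Y ∧ t e ∈ Y) → ω e = 0)}

/-- The incidence matrix of a digraph without loops. -/
def incidenceMatrix {V E : Type} [DecidableEq V] (s t : E → V) :
    Matrix V E ℝ :=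
  fun v e => if v = s e then 1 else if v = t e then -1 else 0

namespace IncAux

set_option linter.unusedSectionVars false
variable {V E : Type} [Fintype V] [Fintype E] [DecidableEq V] [DecidableEq E] (s t : E → V)

def chi (a : V) : V → ℝ := fun x => if a = x then 1 else 0

def psi (p : E × Bool) : E → ℝ :=
  fun x => if p.1 = x then (if p.2 then 1 else -1) else 0

lemma inc_eq (hloop : ∀ e, s e ≠ t e) (v : V) (e : E) :
    incidenceMatrix s t v e = (if s e = v then 1 else 0) - (if t e = v then 1 else 0) := by
  unfold incidenceMatrix
  rcases eq_or_ne (s e) v with h1 | h1 <;> rcases eq_or_ne (t e) v with h2 | h2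
  · exact absurd (h1.trans h2.symm) (hloop e)
  · subst h1; simp [h2]
  · subst h2; simp [h1, Ne.symm h1]
  · simp [h1, h2, Ne.symm h1, Ne.symm h2]

lemma mulVec_apply (hloop : ∀ e, s e ≠ t e) (γ : E → ℝ) (v : V) :
    (incidenceMatrix s t).mulVecLin γ v
      = ∑ e : E, ((if s e = v then γ e else 0) - (if t e = v then γ e else 0)) := by
  simp only [Matrix.mulVecLin_apply, Matrix.mulVec, dotProduct]
  refine Finset.sum_congr rfl fun e _ => ?_
  rw [inc_eq s t hloop]
  split_ifs <;> ring

lemma transpose_mulVec_apply (hloop : ∀ e, s e ≠ t e) (f : V → ℝ) (e : E) :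
    (incidenceMatrix s t).transpose.mulVecLin f e = f (s e) - f (t e) := by
  simp only [Matrix.mulVecLin_apply, Matrix.mulVec, dotProduct, Matrix.transpose_apply]
  have h : ∀ v : V, incidenceMatrix s t v e * f v
      = (if s e = v then f v else 0) - (if t e = v then f v else 0) := by
    intro v; rw [inc_eq s t hloop]; split_ifs <;> ring
  rw [Finset.sum_congr rfl fun v _ => h v, Finset.sum_sub_distrib,
    Finset.sum_ite_eq Finset.univ (s e) f, Finset.sum_ite_eq Finset.univ (t e) f]
  simp

end IncAux

namespace IncAux
set_option linter.unusedSectionVars false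

variable {V E : Type} [Fintype V] [Fintype E] [DecidableEq V] [DecidableEq E] (s t : E → V)

lemma mulVec_psi_true (hloop : ∀ e, s e ≠ t e) (e : E) :
    (incidenceMatrix s t).mulVecLin (psi (e, true)) = chi (s e) - chi (t e) := by
  funext v
  simp only [Matrix.mulVecLin_apply, Matrix.mulVec, dotProduct, psi]
  rw [Finset.sum_congr rfl (fun e' (_ : e' ∈ Finset.univ) => by
    show incidenceMatrix s t v e' * (if e = e' then (if true then (1:ℝ) else -1) else 0)
        = if e = e' then incidenceMatrix s t v e' * 1 else 0
    split_ifs <;> simp_all)]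
  rw [Finset.sum_ite_eq Finset.univ e fun e' => incidenceMatrix s t v e' * 1]
  simp only [Finset.mem_univ, if_true, mul_one, inc_eq s t hloop]
  rfl

lemma mulVec_psi_false (hloop : ∀ e, s e ≠ t e) (e : E) :
    (incidenceMatrix s t).mulVecLin (psi (e, false)) = chi (t e) - chi (s e) := by
  have hneg : psi (e, false) = -psi (e, true) (E := E) := by
    funext x; by_cases h : e = x <;> simp [psi, h]
  rw [hneg, map_neg, mulVec_psi_true s t hloop]
  abel

lemma chain_sum (hloop : ∀ e, s e ≠ t e) :
    ∀ (l : List (E × Bool)) (u w : V), IsChainL s t u l w →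
      (incidenceMatrix s t).mulVecLin (l.map psi).sum = chi u - chi w := by
  intro l
  induction l with
  | nil =>
    intro u w h
    have : u = w := h
    subst this
    simp
  | cons p l ih =>
    rcases p with ⟨e, b⟩
    cases b
    · rintro u w ⟨he, hch⟩
      rw [List.map_cons, List.sum_cons, map_add, mulVec_psi_false s t hloop,
        ih _ _ hch, he]
      abel
    · rintro u w ⟨he, hch⟩
      rw [List.map_cons, List.sum_cons, map_add, mulVec_psi_true s t hloop,
        ih _ _ hch, he]
      abel

lemma eq_sum_of_conds :
    ∀ (l : List (E × Bool)) (γ : E → ℝ), (l.map Prod.fst).Nodup →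
      (∀ e : E, ((e, true) ∈ l → γ e = 1) ∧ ((e, false) ∈ l → γ e = -1) ∧
        ((e, true) ∉ l ∧ (e, false) ∉ l → γ e = 0)) →
      γ = (l.map psi).sum := by
  intro l
  induction l with
  | nil =>
    intro γ _ hc
    funext e
    simpa using (hc e).2.2 ⟨List.not_mem_nil, List.not_mem_nil⟩
  | cons p l ih =>
    intro γ hnd hc
    rw [List.map_cons, List.nodup_cons] at hnd
    have hpsi0 : ∀ e : E, e ∈ l.map Prod.fst → psi p e = 0 := by
      intro e he
      have hne : p.1 ≠ e := fun h => hnd.1 (h ▸ he)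
      simp [psi, hne]
    have key : (fun x => γ x - psi p x) = (l.map psi).sum := by
      refine ih _ hnd.2 fun e => ⟨?_, ?_, ?_⟩
      · intro he
        have h1 : γ e = 1 := (hc e).1 (List.mem_cons_of_mem _ he)
        have h0 : psi p e = 0 := hpsi0 e (List.mem_map.2 ⟨_, he, rfl⟩)
        simp [h1, h0]
      · intro he
        have h1 : γ e = -1 := (hc e).2.1 (List.mem_cons_of_mem _ he)
        have h0 : psi p e = 0 := hpsi0 e (List.mem_map.2 ⟨_, he, rfl⟩)
        simp [h1, h0]
      · rintro ⟨ht, hf⟩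
        rcases p with ⟨e₀, b₀⟩
        by_cases hep : e₀ = e
        · cases b₀
          · have hmem : (e, false) ∈ (e₀, false) :: l :=
              List.mem_cons.2 (Or.inl (by rw [hep]))
            have h1 : γ e = -1 := (hc e).2.1 hmem
            simp [h1, psi, hep]
          · have hmem : (e, true) ∈ (e₀, true) :: l :=
              List.mem_cons.2 (Or.inl (by rw [hep]))
            have h1 : γ e = 1 := (hc e).1 hmem
            simp [h1, psi, hep]
        · have hT : (e, true) ∉ (e₀, b₀) :: l := by
            intro h
            rcases List.mem_cons.1 h with h | h
            · exact hep (congrArg Prod.fst h).symm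
            · exact ht h
          have hF : (e, false) ∉ (e₀, b₀) :: l := by
            intro h
            rcases List.mem_cons.1 h with h | h
            · exact hep (congrArg Prod.fst h).symm
            · exact hf h
          have h1 : γ e = 0 := (hc e).2.2 ⟨hT, hF⟩
          simp [h1, psi, hep]
    have hγ : γ = psi p + fun x => γ x - psi p x := by funext x; simp
    rw [hγ, key, List.map_cons, List.sum_cons]

end IncAux

namespace IncAux
set_option linter.unusedSectionVars false

variable {V E : Type} [Fintype V] [Fintype E] [DecidableEq V] [DecidableEq E] (s t : E → V)

lemma range_eq_span_cocycle (hloop : ∀ e, s e ≠ t e) :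
    LinearMap.range (incidenceMatrix s t).transpose.mulVecLin
      = Submodule.span ℝ (cocycleVecs s t) := by
  classical
  apply le_antisymm
  · rintro x ⟨f, rfl⟩
    have hf : f = ∑ v : V, f v • chi v := pi_eq_sum_univ f
    rw [hf, map_sum]
    refine Submodule.sum_mem _ fun v _ => ?_
    rw [map_smul]
    refine Submodule.smul_mem _ _ (Submodule.subset_span ?_)
    refine ⟨{v}, fun e => ?_⟩
    simp only [Set.mem_singleton_iff, transpose_mulVec_apply s t hloop, chi]
    refine ⟨?_, ?_, ?_⟩
    · rintro ⟨hs, ht⟩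
      rw [if_pos hs.symm, if_neg (fun h => ht h.symm)]; norm_num
    · rintro ⟨hs, ht⟩
      rw [if_neg (fun h => hs h.symm), if_pos ht.symm]; norm_num
    · rintro ⟨h1, h2⟩
      by_cases hs : s e = v <;> by_cases ht : t e = v
      · exact absurd (hs.trans ht.symm) (hloop e)
      · exact absurd ⟨hs, ht⟩ h1
      · exact absurd ⟨hs, ht⟩ h2
      · rw [if_neg (fun h => hs h.symm), if_neg (fun h => ht h.symm)]; norm_num
  · rw [Submodule.span_le]
    rintro ω ⟨Y, hY⟩
    refine ⟨fun v => if v ∈ Y then 1 else 0, ?_⟩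
    funext e
    rw [transpose_mulVec_apply s t hloop]
    by_cases hs : s e ∈ Y <;> by_cases ht : t e ∈ Y
    · rw [(hY e).2.2 ⟨fun h => h.2 ht, fun h => h.1 hs⟩]; simp [hs, ht]
    · rw [(hY e).1 ⟨hs, ht⟩]; simp [hs, ht]
    · rw [(hY e).2.1 ⟨hs, ht⟩]; simp [hs, ht]
    · rw [(hY e).2.2 ⟨fun h => hs h.1, fun h => ht h.2⟩]; simp [hs, ht]

lemma chain_const {f : V → ℝ} (hconst : ∀ e, f (s e) = f (t e)) :
    ∀ (l : List (E × Bool)) (u w : V), IsChainL s t u l w → f u = f w := by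
  intro l
  induction l with
  | nil => intro u w h; rw [show u = w from h]
  | cons p l ih =>
    rcases p with ⟨e, b⟩
    cases b
    · rintro u w ⟨he, hch⟩
      rw [← he, ← hconst e]
      exact ih _ _ hch
    · rintro u w ⟨he, hch⟩
      rw [← he, hconst e]
      exact ih _ _ hch

lemma rank_add_card (hloop : ∀ e, s e ≠ t e) :
    (incidenceMatrix s t).rank +
        Nat.card (Quot (fun a b : V => ∃ l, IsChainL s t a l b)) = Fintype.card V := by
  classical
  set r := fun a b : V => ∃ l, IsChainL s t a l b with hr
  have hfin : Finite (Quot r) := Finite.of_surjective (Quot.mk r) Quot.mk_surjective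
  letI : Fintype (Quot r) := Fintype.ofFinite _
  set L : (Quot r → ℝ) →ₗ[ℝ] (V → ℝ) := LinearMap.funLeft ℝ ℝ (Quot.mk r) with hL
  have hinj : Function.Injective L :=
    LinearMap.funLeft_injective_of_surjective ℝ ℝ _ Quot.mk_surjective
  have hrange : LinearMap.range L = LinearMap.ker (incidenceMatrix s t).transpose.mulVecLin := by
    ext f
    constructor
    · rintro ⟨g, rfl⟩
      rw [LinearMap.mem_ker]
      funext e
      rw [transpose_mulVec_apply s t hloop]
      have : Quot.mk r (s e) = Quot.mk r (t e) :=
        Quot.sound ⟨[(e, true)], ⟨rfl, rfl⟩⟩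
      show g (Quot.mk r (s e)) - g (Quot.mk r (t e)) = 0
      rw [this, sub_self]
    · intro hf
      rw [LinearMap.mem_ker] at hf
      have hconst : ∀ e, f (s e) = f (t e) := by
        intro e
        have h0 := congrFun hf e
        rw [transpose_mulVec_apply s t hloop, Pi.zero_apply] at h0
        linarith
      have hresp : ∀ a b : V, r a b → f a = f b := by
        rintro a b ⟨l, hl⟩
        exact chain_const s t hconst l a b hl
      exact ⟨Quot.lift f hresp, rfl⟩
  have hrank : (incidenceMatrix s t).rank
      = Module.finrank ℝ (LinearMap.range (incidenceMatrix s t).transpose.mulVecLin) := by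
    rw [← Matrix.rank_transpose]
    rfl
  have hcard : Nat.card (Quot r)
      = Module.finrank ℝ (LinearMap.ker (incidenceMatrix s t).transpose.mulVecLin) := by
    rw [← hrange, LinearMap.finrank_range_of_inj hinj, Module.finrank_pi,
      Nat.card_eq_fintype_card]
  rw [hrank, hcard]
  rw [LinearMap.finrank_range_add_finrank_ker (incidenceMatrix s t).transpose.mulVecLin,
    Module.finrank_pi]

end IncAux

namespace IncAux
set_option linter.unusedSectionVars false

variable {V E : Type} [Fintype V] [Fintype E] [DecidableEq V] [DecidableEq E] (s t : E → V)

/-- sign-validity of a walk w.r.t. a flow `γ` -/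
def Valid (γ : E → ℝ) (l : List (E × Bool)) : Prop :=
  ∀ p ∈ l, if p.2 then 0 < γ p.1 else γ p.1 < 0

/-- list of vertices visited by a walk, excluding the final one -/
def chainVerts : V → List (E × Bool) → List V
  | _, [] => []
  | v, (e, true) :: l => v :: chainVerts (t e) l
  | v, (e, false) :: l => v :: chainVerts (s e) l

lemma starts_mem : ∀ (l : List (E × Bool)) (u w : V), IsChainL s t u l w →
    ∀ p ∈ l, (if p.2 then s p.1 else t p.1) ∈ chainVerts s t u l := by
  intro l
  induction l with
  | nil => intro u w _ p hp; exact absurd hp List.not_mem_nil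
  | cons q l ih =>
    rcases q with ⟨e, b⟩
    cases b
    · rintro u w ⟨he, hch⟩ p hp
      rcases List.mem_cons.1 hp with rfl | hp
      · show (if false = true then s e else t e) ∈ chainVerts s t u ((e, false) :: l)
        simpa [chainVerts] using Or.inl he
      · show _ ∈ chainVerts s t u ((e, false) :: l)
        simpa [chainVerts] using Or.inr (ih _ _ hch p hp)
    · rintro u w ⟨he, hch⟩ p hp
      rcases List.mem_cons.1 hp with rfl | hp
      · show (if true = true then s e else t e) ∈ chainVerts s t u ((e, true) :: l)
        simpa [chainVerts] using Or.inl he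
      · show _ ∈ chainVerts s t u ((e, true) :: l)
        simpa [chainVerts] using Or.inr (ih _ _ hch p hp)

def posIn (γ : E → ℝ) (v : V) : ℝ :=
  ∑ e : E, ((if t e = v then max (γ e) 0 else 0) + (if s e = v then max (-γ e) 0 else 0))

def posOut (γ : E → ℝ) (v : V) : ℝ :=
  ∑ e : E, ((if s e = v then max (γ e) 0 else 0) + (if t e = v then max (-γ e) 0 else 0))

lemma posOut_eq_posIn (hloop : ∀ e, s e ≠ t e) {γ : E → ℝ}
    (hker : (incidenceMatrix s t).mulVecLin γ = 0) (v : V) :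
    posOut s t γ v = posIn s t γ v := by
  have h := congrFun hker v
  rw [mulVec_apply s t hloop, Pi.zero_apply] at h
  have key : posOut s t γ v - posIn s t γ v
      = ∑ e : E, ((if s e = v then γ e else 0) - (if t e = v then γ e else 0)) := by
    unfold posOut posIn
    rw [← Finset.sum_sub_distrib]
    refine Finset.sum_congr rfl fun e _ => ?_
    have hmax := max_zero_sub_max_neg_zero_eq_self (γ e)
    by_cases hs : s e = v <;> by_cases ht : t e = v
    · exact absurd (hs.trans ht.symm) (hloop e)
    · simp only [hs, ht, if_true, if_false]; linarith
    · simp only [hs, ht, if_true, if_false]; linarith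
    · simp only [hs, ht, if_false]; ring
  rw [h] at key
  linarith

lemma exists_step_of_posOut_pos {γ : E → ℝ} {v : V} (hpos : 0 < posOut s t γ v) :
    ∃ e, (s e = v ∧ 0 < γ e) ∨ (t e = v ∧ γ e < 0) := by
  by_contra hc
  push_neg at hc
  have : posOut s t γ v = 0 := by
    refine Finset.sum_eq_zero fun e _ => ?_
    have h1 : s e = v → γ e ≤ 0 := fun h => (hc e).1 h
    have h2 : t e = v → 0 ≤ γ e := fun h => (hc e).2 h
    by_cases hs : s e = v <;> by_cases ht : t e = v <;>
      simp [hs, ht, max_eq_right, h1, h2, neg_nonpos.2]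
  rw [this] at hpos
  exact lt_irrefl 0 hpos

lemma posIn_term_nonneg (γ : E → ℝ) (v : V) (e : E) :
    0 ≤ (if t e = v then max (γ e) 0 else 0) + (if s e = v then max (-γ e) 0 else 0) := by
  apply add_nonneg <;> split_ifs <;> simp [le_max_right]

lemma posIn_pos_true {γ : E → ℝ} {e : E} (hγ : 0 < γ e) : 0 < posIn s t γ (t e) := by
  refine Finset.sum_pos' (fun i _ => posIn_term_nonneg s t γ _ i) ⟨e, Finset.mem_univ e, ?_⟩
  rw [if_pos rfl]
  have h1 : 0 < max (γ e) 0 := lt_of_lt_of_le hγ (le_max_left _ _)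
  have h2 : (0:ℝ) ≤ if s e = t e then max (-γ e) 0 else 0 := by
    split_ifs <;> simp [le_max_right]
  linarith

lemma posIn_pos_false {γ : E → ℝ} {e : E} (hγ : γ e < 0) : 0 < posIn s t γ (s e) := by
  refine Finset.sum_pos' (fun i _ => posIn_term_nonneg s t γ _ i) ⟨e, Finset.mem_univ e, ?_⟩
  rw [if_pos rfl]
  have h1 : 0 < max (-γ e) 0 := lt_of_lt_of_le (by linarith) (le_max_left _ _)
  have h2 : (0:ℝ) ≤ if t e = s e then max (γ e) 0 else 0 := by
    split_ifs <;> simp [le_max_right]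
  linarith

end IncAux

namespace IncAux
set_option linter.unusedSectionVars false

variable {V E : Type} [Fintype V] [Fintype E] [DecidableEq V] [DecidableEq E] (s t : E → V)

lemma ext_lemma (hloop : ∀ e, s e ≠ t e) {γ : E → ℝ}
    (hker : (incidenceMatrix s t).mulVecLin γ = 0) :
    ∀ (n : ℕ) (A : Finset V) (v : V), v ∉ A → 0 < posIn s t γ v →
      Fintype.card V ≤ A.card + n →
      (∃ (a : V) (l : List (E × Bool)), l ≠ [] ∧ IsChainL s t a l a ∧ Valid γ l ∧
        (l.map Prod.fst).Nodup) ∨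
      (∃ (l : List (E × Bool)) (w : V), l ≠ [] ∧ IsChainL s t v l w ∧ Valid γ l ∧
        (l.map Prod.fst).Nodup ∧ w ∈ A ∧ ∀ x ∈ chainVerts s t v l, x ∉ A) := by
  intro n
  induction n with
  | zero =>
    intro A v hvA _ hcard
    exfalso
    have : A = Finset.univ :=
      Finset.eq_univ_of_card A (le_antisymm (Finset.card_le_univ A) (by simpa using hcard))
    exact hvA (this ▸ Finset.mem_univ v)
  | succ n ih =>
    intro A v hvA hin hcard
    have hout : 0 < posOut s t γ v := by
      rw [posOut_eq_posIn s t hloop hker]; exact hin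
    obtain ⟨e, he⟩ := exists_step_of_posOut_pos s t hout
    rcases he with ⟨hse, hγe⟩ | ⟨hte, hγe⟩
    · -- forward step from v = s e to u = t e
      have hu_ne : t e ≠ v := fun h => hloop e (hse.trans h.symm)
      have hu_in : 0 < posIn s t γ (t e) := posIn_pos_true s t hγe
      have hvalid1 : Valid γ [(e, true)] := by
        intro p hp
        rcases List.mem_singleton.1 hp with rfl
        simpa using hγe
      by_cases huA : t e ∈ A
      · refine Or.inr ⟨[(e, true)], t e, by simp, ⟨hse, rfl⟩, hvalid1, by simp, huA, ?_⟩
        intro x hx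
        have : x = v := by simpa [chainVerts] using hx
        rw [this]; exact hvA
      · have hrec := ih (insert v A) (t e)
          (by simp [huA, hu_ne])
          hu_in
          (by rw [Finset.card_insert_of_notMem hvA]; omega)
        rcases hrec with hcyc | ⟨l', w', hne', hch', hval', hnd', hw', hverts'⟩
        · exact Or.inl hcyc
        · have hnotmem : e ∉ l'.map Prod.fst := by
            intro hmem
            obtain ⟨p, hp, hpe⟩ := List.mem_map.1 hmem
            have hp' : (e, p.2) ∈ l' := by
              rcases p with ⟨e'', b''⟩
              dsimp at hpe ⊢
              rw [hpe] at hp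
              exact hp
            cases hb : p.2
            · rw [hb] at hp'
              have : γ e < 0 := by simpa using hval' _ hp'
              linarith
            · rw [hb] at hp'
              have hst := starts_mem s t l' (t e) w' hch' (e, true) hp'
              have : s e ∈ chainVerts s t (t e) l' := by simpa using hst
              rw [hse] at this
              exact hverts' v this (Finset.mem_insert_self v A)
          have hvalid : Valid γ ((e, true) :: l') := by
            intro p hp
            rcases List.mem_cons.1 hp with rfl | hp
            · simpa using hγe
            · exact hval' p hp
          have hnodup : (((e, true) :: l').map Prod.fst).Nodup := by
            rw [List.map_cons, List.nodup_cons]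
            exact ⟨hnotmem, hnd'⟩
          by_cases hw'v : w' = v
          · exact Or.inl ⟨v, (e, true) :: l', by simp, ⟨hse, hw'v ▸ hch'⟩, hvalid, hnodup⟩
          · refine Or.inr ⟨(e, true) :: l', w', by simp, ⟨hse, hch'⟩, hvalid, hnodup,
              (Finset.mem_insert.1 hw').resolve_left hw'v, ?_⟩
            intro x hx
            rcases List.mem_cons.1 (by simpa [chainVerts] using hx : x ∈ v :: chainVerts s t (t e) l') with rfl | hx
            · exact hvA
            · exact fun hxA => hverts' x hx (Finset.mem_insert_of_mem hxA)
    · -- backward step from v = t e to u = s e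
      have hu_ne : s e ≠ v := fun h => hloop e (h.trans hte.symm)
      have hu_in : 0 < posIn s t γ (s e) := posIn_pos_false s t hγe
      have hvalid1 : Valid γ [(e, false)] := by
        intro p hp
        rcases List.mem_singleton.1 hp with rfl
        simpa using hγe
      by_cases huA : s e ∈ A
      · refine Or.inr ⟨[(e, false)], s e, by simp, ⟨hte, rfl⟩, hvalid1, by simp, huA, ?_⟩
        intro x hx
        have : x = v := by simpa [chainVerts] using hx
        rw [this]; exact hvA
      · have hrec := ih (insert v A) (s e)
          (by simp [huA, hu_ne])
          hu_in
          (by rw [Finset.card_insert_of_notMem hvA]; omega)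
        rcases hrec with hcyc | ⟨l', w', hne', hch', hval', hnd', hw', hverts'⟩
        · exact Or.inl hcyc
        · have hnotmem : e ∉ l'.map Prod.fst := by
            intro hmem
            obtain ⟨p, hp, hpe⟩ := List.mem_map.1 hmem
            have hp' : (e, p.2) ∈ l' := by
              rcases p with ⟨e'', b''⟩
              dsimp at hpe ⊢
              rw [hpe] at hp
              exact hp
            cases hb : p.2
            · rw [hb] at hp'
              have hst := starts_mem s t l' (s e) w' hch' (e, false) hp'
              have : t e ∈ chainVerts s t (s e) l' := by simpa using hst
              rw [hte] at this
              exact hverts' v this (Finset.mem_insert_self v A)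
            · rw [hb] at hp'
              have : 0 < γ e := by simpa using hval' _ hp'
              linarith
          have hvalid : Valid γ ((e, false) :: l') := by
            intro p hp
            rcases List.mem_cons.1 hp with rfl | hp
            · simpa using hγe
            · exact hval' p hp
          have hnodup : (((e, false) :: l').map Prod.fst).Nodup := by
            rw [List.map_cons, List.nodup_cons]
            exact ⟨hnotmem, hnd'⟩
          by_cases hw'v : w' = v
          · exact Or.inl ⟨v, (e, false) :: l', by simp, ⟨hte, hw'v ▸ hch'⟩, hvalid, hnodup⟩
          · refine Or.inr ⟨(e, false) :: l', w', by simp, ⟨hte, hch'⟩, hvalid, hnodup,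
              (Finset.mem_insert.1 hw').resolve_left hw'v, ?_⟩
            intro x hx
            rcases List.mem_cons.1 (by simpa [chainVerts] using hx : x ∈ v :: chainVerts s t (s e) l') with rfl | hx
            · exact hvA
            · exact fun hxA => hverts' x hx (Finset.mem_insert_of_mem hxA)

lemma exists_cycle (hloop : ∀ e, s e ≠ t e) {γ : E → ℝ}
    (hker : (incidenceMatrix s t).mulVecLin γ = 0) (hγ : γ ≠ 0) :
    ∃ (a : V) (l : List (E × Bool)), l ≠ [] ∧ IsChainL s t a l a ∧ Valid γ l ∧
      (l.map Prod.fst).Nodup := by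
  obtain ⟨e₀, he₀⟩ := Function.ne_iff.1 hγ
  have hpos : ∃ v₀ : V, 0 < posIn s t γ v₀ := by
    rcases lt_or_gt_of_ne (show γ e₀ ≠ 0 by simpa using he₀) with h | h
    · exact ⟨s e₀, posIn_pos_false s t h⟩
    · exact ⟨t e₀, posIn_pos_true s t h⟩
  obtain ⟨v₀, hv₀⟩ := hpos
  rcases ext_lemma s t hloop hker (Fintype.card V) ∅ v₀ (Finset.notMem_empty v₀) hv₀
      (by simp) with h | ⟨l, w, _, _, _, _, hw, _⟩
  · exact h
  · exact absurd hw (Finset.notMem_empty w)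

end IncAux

namespace IncAux
set_option linter.unusedSectionVars false

variable {V E : Type} [Fintype V] [Fintype E] [DecidableEq V] [DecidableEq E] (s t : E → V)

lemma cycle_mem_ker (hloop : ∀ e, s e ≠ t e) {γ : E → ℝ} (hγ : γ ∈ cycleVecs s t) :
    (incidenceMatrix s t).mulVecLin γ = 0 := by
  obtain ⟨a, l, hch, hnd, hc⟩ := hγ
  rw [eq_sum_of_conds l γ hnd hc, chain_sum s t hloop l a a hch]
  simp

lemma span_le_ker (hloop : ∀ e, s e ≠ t e) :
    Submodule.span ℝ (cycleVecs s t) ≤ LinearMap.ker (incidenceMatrix s t).mulVecLin := by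
  rw [Submodule.span_le]
  intro γ hγ
  exact LinearMap.mem_ker.2 (cycle_mem_ker s t hloop hγ)

lemma ker_le_span (hloop : ∀ e, s e ≠ t e) :
    LinearMap.ker (incidenceMatrix s t).mulVecLin ≤ Submodule.span ℝ (cycleVecs s t) := by
  suffices H : ∀ (n : ℕ) (γ : E → ℝ), (Finset.univ.filter fun e => γ e ≠ 0).card ≤ n →
      (incidenceMatrix s t).mulVecLin γ = 0 → γ ∈ Submodule.span ℝ (cycleVecs s t) by
    intro γ hγ
    exact H _ γ le_rfl (LinearMap.mem_ker.1 hγ)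
  intro n
  induction n with
  | zero =>
    intro γ hcard _
    have h0 : γ = 0 := by
      funext e
      by_contra h
      have hmem : e ∈ Finset.univ.filter (fun e => γ e ≠ 0) :=
        Finset.mem_filter.2 ⟨Finset.mem_univ e, h⟩
      have := Finset.card_pos.2 ⟨e, hmem⟩
      omega
    rw [h0]
    exact Submodule.zero_mem _
  | succ n ih =>
    intro γ hcard hker
    by_cases hγ0 : γ = 0
    · rw [hγ0]; exact Submodule.zero_mem _
    obtain ⟨a, l, hne, hch, hval, hnd⟩ := exists_cycle s t hloop hker hγ0
    set δ : E → ℝ := fun e => if (e, true) ∈ l then 1 else if (e, false) ∈ l then -1 else 0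
      with hδ
    have hnotboth : ∀ e, (e, true) ∈ l → (e, false) ∈ l → False := by
      intro e h1 h2
      have o1 : 0 < γ e := by simpa using hval _ h1
      have o2 : γ e < 0 := by simpa using hval _ h2
      linarith
    have hconds : ∀ e : E, ((e, true) ∈ l → δ e = 1) ∧ ((e, false) ∈ l → δ e = -1) ∧
        ((e, true) ∉ l ∧ (e, false) ∉ l → δ e = 0) := by
      intro e
      refine ⟨fun h => by simp [hδ, h], fun h => ?_, fun h => by simp [hδ, h.1, h.2]⟩
      have hnt : (e, true) ∉ l := fun h' => hnotboth e h' h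
      simp [hδ, hnt, h]
    have hδcyc : δ ∈ cycleVecs s t := ⟨a, l, hch, hnd, hconds⟩
    have hδker : (incidenceMatrix s t).mulVecLin δ = 0 := by
      rw [eq_sum_of_conds l δ hnd hconds, chain_sum s t hloop l a a hch]
      simp
    obtain ⟨p₀, hp₀⟩ := List.exists_mem_of_ne_nil l hne
    set S : Finset E := (l.map Prod.fst).toFinset with hS
    have hmemS : ∀ e, e ∈ S ↔ ∃ b, (e, b) ∈ l := by
      intro e
      rw [hS, List.mem_toFinset, List.mem_map]
      constructor
      · rintro ⟨p, hp, rfl⟩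
        exact ⟨p.2, by simpa using hp⟩
      · rintro ⟨b, hb⟩
        exact ⟨(e, b), hb, rfl⟩
    have hSne : S.Nonempty := ⟨p₀.1, (hmemS p₀.1).2 ⟨p₀.2, by simpa using hp₀⟩⟩
    have hsign : ∀ e ∈ S, (0 < γ e ∧ δ e = 1) ∨ (γ e < 0 ∧ δ e = -1) := by
      intro e he
      obtain ⟨b, hb⟩ := (hmemS e).1 he
      cases b
      · exact Or.inr ⟨by simpa using hval _ hb, (hconds e).2.1 hb⟩
      · exact Or.inl ⟨by simpa using hval _ hb, (hconds e).1 hb⟩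
    set T := S.image fun e => |γ e| with hT
    have hTne : T.Nonempty := hSne.image _
    set c := T.min' hTne with hc
    obtain ⟨estar, hestar, hcval0⟩ := Finset.mem_image.1 (T.min'_mem hTne)
    have hcval : |γ estar| = c := hcval0.trans hc.symm
    have hcpos : 0 < c := by
      rw [← hcval]
      rcases hsign estar hestar with ⟨h, _⟩ | ⟨h, _⟩
      · exact abs_pos.2 (ne_of_gt h)
      · exact abs_pos.2 (ne_of_lt h)
    set γ' : E → ℝ := γ - c • δ with hγ'
    have hker' : (incidenceMatrix s t).mulVecLin γ' = 0 := by
      rw [hγ', map_sub, map_smul, hδker, smul_zero, hker, sub_zero]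
    have hzero : ∀ e, γ e = 0 → γ' e = 0 := by
      intro e he
      have heS : e ∉ S := by
        intro hmem
        rcases hsign e hmem with ⟨h, _⟩ | ⟨h, _⟩ <;> rw [he] at h <;> exact lt_irrefl 0 h
      have hδ0 : δ e = 0 := (hconds e).2.2
        ⟨fun h => heS ((hmemS e).2 ⟨true, h⟩), fun h => heS ((hmemS e).2 ⟨false, h⟩)⟩
      simp [hγ', he, hδ0]
    have hγ'e : ∀ e, γ' e = γ e - c * δ e := by
      intro e
      simp [hγ']
    have hstar0 : γ' estar = 0 := by
      rcases hsign estar hestar with ⟨h, hd⟩ | ⟨h, hd⟩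
      · rw [hγ'e, hd, ← hcval, abs_of_pos h]; ring
      · rw [hγ'e, hd, ← hcval, abs_of_neg h]; ring
    have hγstar : γ estar ≠ 0 := by
      rcases hsign estar hestar with ⟨h, _⟩ | ⟨h, _⟩
      · exact ne_of_gt h
      · exact ne_of_lt h
    have hsubset : (Finset.univ.filter fun e => γ' e ≠ 0)
        ⊆ (Finset.univ.filter fun e => γ e ≠ 0) := by
      intro e he
      rw [Finset.mem_filter] at he ⊢
      exact ⟨Finset.mem_univ e, fun h0 => he.2 (hzero e h0)⟩
    have hssub : (Finset.univ.filter fun e => γ' e ≠ 0)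
        ⊂ (Finset.univ.filter fun e => γ e ≠ 0) := by
      refine (Finset.ssubset_iff_of_subset hsubset).2
        ⟨estar, Finset.mem_filter.2 ⟨Finset.mem_univ _, hγstar⟩, ?_⟩
      intro hmem
      exact (Finset.mem_filter.1 hmem).2 hstar0
    have hcard' := Finset.card_lt_card hssub
    have hmem' := ih γ' (by omega) hker'
    have hdecomp : γ = γ' + c • δ := by
      rw [hγ']
      abel
    rw [hdecomp]
    exact Submodule.add_mem _ hmem'
      (Submodule.smul_mem _ c (Submodule.subset_span hδcyc))

end IncAux

/-- if `D` is the incidence matrix of a finite directed graph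
without loops, with `m` vertices and `p` connected components (of the
underlying undirected graph), then `rank D = m - p`; moreover the kernel of
`D` is the cycle (flow) space and the row space of `D` is the cocycle
(tension) space. -/
theorem incidence_matrix_rank_ker_range {V E : Type} [Fintype V] [Fintype E]
    [DecidableEq V] (s t : E → V) (hloop : ∀ e : E, s e ≠ t e) :
    (incidenceMatrix s t).rank +
        Nat.card (Quot (fun a b : V => ∃ l, IsChainL s t a l b)) =
      Fintype.card V ∧
    LinearMap.ker (incidenceMatrix s t).mulVecLin =
      Submodule.span ℝ (cycleVecs s t) ∧
    LinearMap.range (incidenceMatrix s t).transpose.mulVecLin =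
      Submodule.span ℝ (cocycleVecs s t) := by
  letI : DecidableEq E := Classical.decEq E
  exact ⟨IncAux.rank_add_card s t hloop,
    le_antisymm (IncAux.ker_le_span s t hloop) (IncAux.span_le_ker s t hloop),
    IncAux.range_eq_span_cocycle s t hloop⟩
end
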